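/- Let a, b be real numbers and n ≥ 1 an integer. Define J_n(x) := ∫_{−∞}^{+∞} e^{−y²/2} H_n(ay + bx) dy. Then J_n is differentiable on ℝ and J_n'(x) = 2nb · J_{n−1}(x) for every x ∈ ℝ. -/

import Mathlib

/-- The Hermite polynomials `H_n(x) = (-1)^n e^{x²} (d/dx)^n e^{-x²}`. -/
noncomputable def hermiteH (n : ℕ) (x : ℝ) : ℝ :=
  (-1 : ℝ) ^ n * Real.exp (x ^ 2) * iteratedDeriv n (fun y => Real.exp (-y ^ 2)) x

/-- `J_n(x) = ∫ e^{-y²/2} H_n(ay + bx) dy`. -/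
noncomputable def J (a b : ℝ) (n : ℕ) (x : ℝ) : ℝ :=
  ∫ y : ℝ, Real.exp (-y ^ 2 / 2) * hermiteH n (a * y + b * x)


open Polynomial Real MeasureTheory Metric

noncomputable def ph : ℕ → ℝ[X]
  | 0 => 1
  | n+1 => 2 * X * ph n - derivative (ph n)

lemma ph_deriv : ∀ n : ℕ, derivative (ph (n+1)) = C (2*(n+1) : ℝ) * ph n := by
  intro n
  induction n with
  | zero => simp [ph, map_ofNat]
  | succ m ih =>
    have h2 : ((2 : ℝ[X])) = C (2 : ℝ) := by simp [map_ofNat]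
    have hC : (C (2*((m+1 : ℕ)+1) : ℝ) : ℝ[X]) = C (2*((m:ℝ)+1)) + C 2 := by
      rw [← C_add]; push_cast; ring_nf
    rw [show ph (m+2) = 2 * X * ph (m+1) - derivative (ph (m+1)) from rfl, ih,
      derivative_sub, derivative_mul, derivative_mul, derivative_mul, ih,
      derivative_C, derivative_X,
      show ph (m+1) = 2 * X * ph m - derivative (ph m) from rfl, hC, h2, derivative_C]
    ring

lemma iter_eq : ∀ n : ℕ, iteratedDeriv n (fun y : ℝ => Real.exp (-y ^ 2))
    = fun x : ℝ => (-1 : ℝ) ^ n * (ph n).eval x * Real.exp (-x ^ 2) := by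
  intro n
  induction n with
  | zero => funext x; simp [ph]
  | succ m ih =>
    funext x
    rw [iteratedDeriv_succ, ih]
    have h1 : HasDerivAt (fun x : ℝ => Real.exp (-x ^ 2)) (-(2 * x) * Real.exp (-x ^ 2)) x := by
      have h : HasDerivAt (fun x : ℝ => -x ^ 2) (-(2 * x)) x := by
        simpa using ((hasDerivAt_pow 2 x).fun_neg)
      simpa [mul_comm] using h.exp
    have h2 : HasDerivAt (fun x : ℝ => (-1 : ℝ) ^ m * (ph m).eval x * Real.exp (-x ^ 2))
        ((-1 : ℝ) ^ m * ((derivative (ph m)).eval x * Real.exp (-x ^ 2)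
          + (ph m).eval x * (-(2 * x) * Real.exp (-x ^ 2)))) x := by
      simpa [mul_assoc] using (((ph m).hasDerivAt x).mul h1).const_mul ((-1 : ℝ) ^ m)
    rw [h2.deriv]
    show _ = (-1 : ℝ) ^ (m + 1) * (2 * X * ph m - derivative (ph m)).eval x * Real.exp (-x ^ 2)
    simp only [eval_sub, eval_mul, eval_ofNat, eval_X, pow_succ]
    ring

lemma hermiteH_eq (n : ℕ) (x : ℝ) : hermiteH n x = (ph n).eval x := by
  rw [hermiteH, iter_eq]
  have : Real.exp (x ^ 2) * Real.exp (-x ^ 2) = 1 := by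
    rw [← Real.exp_add]; simp
  have hsq : ((-1 : ℝ) ^ n) * ((-1 : ℝ) ^ n) = 1 := by
    rw [← pow_add, ← two_mul, pow_mul]; norm_num
  calc (-1:ℝ) ^ n * Real.exp (x ^ 2) * ((-1:ℝ) ^ n * (ph n).eval x * Real.exp (-x ^ 2))
      = ((-1:ℝ) ^ n * (-1:ℝ) ^ n) * (Real.exp (x ^ 2) * Real.exp (-x ^ 2)) * (ph n).eval x := by
        ring
    _ = (ph n).eval x := by rw [hsq, this]; ring

lemma integrable_poly_gauss (Q : ℝ[X]) :
    MeasureTheory.Integrable (fun y : ℝ => Real.exp (-y ^ 2 / 2) * Q.eval y) := by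
  induction Q using Polynomial.induction_on' with
  | add p q hp hq => simpa [mul_add] using hp.fun_add hq
  | monomial k c =>
    have h := integrable_rpow_mul_exp_neg_mul_sq (b := (1:ℝ)/2) (by norm_num)
      (s := (k : ℝ)) (lt_of_lt_of_le (by norm_num) (Nat.cast_nonneg k))
    have heq : (fun y : ℝ => c * (y ^ (k : ℝ) * Real.exp (-(1/2) * y ^ 2)))
        = fun y : ℝ => Real.exp (-y ^ 2 / 2) * (monomial k c).eval y := by
      funext y
      rw [Real.rpow_natCast, eval_monomial]
      ring_nf
    rw [← heq]
    exact h.const_mul c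

lemma eval_abs_le (P : ℝ[X]) (t : ℝ) :
    |P.eval t| ≤ (∑ i ∈ Finset.range (P.natDegree + 1), |P.coeff i|) * (1 + |t|) ^ P.natDegree := by
  rw [Polynomial.eval_eq_sum_range, Finset.sum_mul]
  refine (Finset.abs_sum_le_sum_abs _ _).trans (Finset.sum_le_sum fun i hi => ?_)
  rw [abs_mul, abs_pow]
  refine mul_le_mul_of_nonneg_left ?_ (abs_nonneg _)
  calc |t| ^ i ≤ (1 + |t|) ^ i :=
        pow_le_pow_left₀ (abs_nonneg t) (by linarith [abs_nonneg t]) i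
    _ ≤ (1 + |t|) ^ P.natDegree :=
        pow_le_pow_right₀ (by linarith [abs_nonneg t])
          (Nat.lt_succ_iff.mp (Finset.mem_range.mp hi))

lemma key (a b : ℝ) (P : ℝ[X]) (x : ℝ) :
    HasDerivAt (fun x : ℝ => ∫ y : ℝ, Real.exp (-y ^ 2 / 2) * P.eval (a * y + b * x))
      (∫ y : ℝ, Real.exp (-y ^ 2 / 2) * (b * (derivative P).eval (a * y + b * x))) x := by
  set P' := derivative P with hP'
  set d := P'.natDegree with hd
  set M := ∑ i ∈ Finset.range (d + 1), |P'.coeff i| with hM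
  have hM0 : 0 ≤ M := Finset.sum_nonneg fun i _ => abs_nonneg _
  set K := 2 * (1 + |a| + |b| * (|x| + 1)) with hK
  have hK0 : 0 ≤ K := by positivity
  set B : ℝ[X] := C (|b| * M * K ^ d) * (1 + X ^ 2) ^ d with hB
  have cont : ∀ (Q : ℝ[X]) (x' : ℝ),
      Continuous fun y : ℝ => Real.exp (-y ^ 2 / 2) * Q.eval (a * y + b * x') := by
    intro Q x'
    exact (Real.continuous_exp.comp ((continuous_pow 2).neg.div_const 2)).mul
      (Q.continuous.comp ((continuous_const.mul continuous_id).add continuous_const))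
  have intQ : ∀ (Q : ℝ[X]) (x' : ℝ),
      MeasureTheory.Integrable
        (fun y : ℝ => Real.exp (-y ^ 2 / 2) * Q.eval (a * y + b * x')) := by
    intro Q x'
    have h := integrable_poly_gauss (Q.comp (C a * X + C (b * x')))
    simpa [eval_comp] using h
  have main := hasDerivAt_integral_of_dominated_loc_of_deriv_le (μ := MeasureTheory.volume)
    (F := fun x' (y : ℝ) => Real.exp (-y ^ 2 / 2) * P.eval (a * y + b * x'))
    (F' := fun x' (y : ℝ) => Real.exp (-y ^ 2 / 2) * (b * P'.eval (a * y + b * x')))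
    (x₀ := x) (s := ball x 1) (bound := fun y => Real.exp (-y ^ 2 / 2) * B.eval y)
    (ball_mem_nhds x one_pos)
    (Filter.Eventually.of_forall fun x' => (cont P x').aestronglyMeasurable)
    (intQ P x)
    (by
      have : Continuous fun y : ℝ => Real.exp (-y ^ 2 / 2) * (b * P'.eval (a * y + b * x)) :=
        (Real.continuous_exp.comp ((continuous_pow 2).neg.div_const 2)).mul
          (continuous_const.mul
            (P'.continuous.comp ((continuous_const.mul continuous_id).add continuous_const)))
      exact this.aestronglyMeasurable)
    (Filter.Eventually.of_forall fun y => by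
      intro x' hx'
      have hx'b : |x'| ≤ |x| + 1 := by
        have := mem_ball_iff_norm.mp hx'
        rw [Real.norm_eq_abs] at this
        calc |x'| = |x + (x' - x)| := by ring_nf
          _ ≤ |x| + |x' - x| := abs_add_le _ _
          _ ≤ |x| + 1 := by linarith [abs_sub_comm x' x ▸ this.le]
      have h1 : 1 + |a * y + b * x'| ≤ K * (1 + y ^ 2) := by
        have : |a * y + b * x'| ≤ |a| * |y| + |b| * (|x| + 1) := by
          calc |a * y + b * x'| ≤ |a * y| + |b * x'| := abs_add_le _ _
            _ = |a| * |y| + |b| * |x'| := by rw [abs_mul, abs_mul]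
            _ ≤ |a| * |y| + |b| * (|x| + 1) := by
                gcongr
        have hy : |y| ≤ 1 + y ^ 2 := by
          rcases le_or_gt (|y|) 1 with h | h
          · nlinarith
          · nlinarith [sq_abs y, abs_nonneg y]
        have ha0 : (0:ℝ) ≤ |a| := abs_nonneg a
        have hb0 : (0:ℝ) ≤ |b| := abs_nonneg b
        have hx0 : (0:ℝ) ≤ |x| := abs_nonneg x
        have h4 : |a| * |y| ≤ |a| * (1 + y ^ 2) := mul_le_mul_of_nonneg_left hy ha0
        rw [hK]
        nlinarith [mul_nonneg ha0 (sq_nonneg y), sq_nonneg y,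
          mul_nonneg (mul_nonneg hb0 (by positivity : (0:ℝ) ≤ |x| + 1)) (sq_nonneg y)]
      have h2 : |P'.eval (a * y + b * x')| ≤ M * (1 + |a * y + b * x'|) ^ d :=
        eval_abs_le P' _
      have h3 : (1 + |a * y + b * x'|) ^ d ≤ (K * (1 + y ^ 2)) ^ d :=
        pow_le_pow_left₀ (by positivity) h1 d
      show |Real.exp (-y ^ 2 / 2) * (b * P'.eval (a * y + b * x'))|
        ≤ Real.exp (-y ^ 2 / 2) * B.eval y
      rw [abs_mul, abs_mul, abs_of_nonneg (Real.exp_pos _).le]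
      have hBy : B.eval y = |b| * M * K ^ d * (1 + y ^ 2) ^ d := by
        simp [hB]
      rw [hBy]
      have : |b| * |P'.eval (a * y + b * x')| ≤ |b| * (M * (K ^ d * (1 + y ^ 2) ^ d)) := by
        have := h2.trans (by
          calc M * (1 + |a * y + b * x'|) ^ d ≤ M * (K * (1 + y ^ 2)) ^ d := by gcongr
            _ = M * (K ^ d * (1 + y ^ 2) ^ d) := by rw [mul_pow])
        exact mul_le_mul_of_nonneg_left this (abs_nonneg b)
      calc Real.exp (-y ^ 2 / 2) * (|b| * |P'.eval (a * y + b * x')|)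
          ≤ Real.exp (-y ^ 2 / 2) * (|b| * (M * (K ^ d * (1 + y ^ 2) ^ d))) :=
            mul_le_mul_of_nonneg_left this (Real.exp_pos _).le
        _ = Real.exp (-y ^ 2 / 2) * (|b| * M * K ^ d * (1 + y ^ 2) ^ d) := by ring)
    (by
      have h := integrable_poly_gauss B
      exact h)
    (Filter.Eventually.of_forall fun y => by
      intro x' hx'
      have h0 : HasDerivAt (fun x : ℝ => a * y + b * x) b x' := by
        simpa using ((hasDerivAt_id x').const_mul b).const_add (a * y)
      have h1 := (P.hasDerivAt (a * y + b * x')).comp x' h0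
      have h2 := h1.const_mul (Real.exp (-y ^ 2 / 2))
      simpa [mul_comm, mul_assoc, mul_left_comm] using h2)
  exact main.2

/-- `J_n` is differentiable with `J_n'(x) = 2nb J_{n-1}(x)`. -/
theorem hasDerivAt_J (a b : ℝ) (n : ℕ) (hn : 1 ≤ n) (x : ℝ) :
    HasDerivAt (J a b n) (2 * n * b * J a b (n - 1) x) x := by
  obtain ⟨m, rfl⟩ : ∃ m, n = m + 1 := ⟨n - 1, (Nat.succ_pred_eq_of_pos hn).symm⟩
  have hfun : J a b (m + 1) = fun x : ℝ =>
      ∫ y : ℝ, Real.exp (-y ^ 2 / 2) * (ph (m + 1)).eval (a * y + b * x) := by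
    funext x'
    simp only [J, hermiteH_eq]
  have hk := key a b (ph (m + 1)) x
  rw [ph_deriv] at hk
  have hval : (∫ y : ℝ, Real.exp (-y ^ 2 / 2) *
        (b * (C (2 * ((m : ℝ) + 1)) * ph m).eval (a * y + b * x)))
      = 2 * ((m : ℝ) + 1) * b * J a b m x := by
    have heq : (fun y : ℝ => Real.exp (-y ^ 2 / 2) *
          (b * (C (2 * ((m : ℝ) + 1)) * ph m).eval (a * y + b * x)))
        = fun y : ℝ => (2 * ((m : ℝ) + 1) * b) *
            (Real.exp (-y ^ 2 / 2) * (ph m).eval (a * y + b * x)) := by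
      funext y
      simp only [eval_mul, eval_C]
      ring
    rw [heq, MeasureTheory.integral_const_mul]
    have : J a b m x = ∫ y : ℝ, Real.exp (-y ^ 2 / 2) * (ph m).eval (a * y + b * x) := by
      simp only [J, hermiteH_eq]
    rw [this]
  rw [hfun]
  rw [hval] at hk
  convert hk using 2
  push_cast
  ring
  rfl
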